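/- Fast escape of the Ornstein–Uhlenbeck process from a small window around 1: let Z¹ be the pathwise solution of Z¹_t = 1 − ∫_0^t Z¹_s ds + B_t, and for ε > 0 let τ₀ := inf{ t ≥ 0 : |Z¹_t − 1| = ε }. Then there exists α > 0 such that for all sufficiently small ε > 0, P(τ₀ > ε) ≤ exp(−ε^{−α}); in particular one may take α = 1/4. -/

import Mathlib

noncomputable section

open MeasureTheory ProbabilityTheory Set Filter Topology

namespace NeuronIF

/-- The discharge rate function `λ^δ`. -/
def lamδ (δ x : ℝ) : ℝ :=
  if x ≤ 1 then 0 else if x ≤ 1 + δ then (x - 1) / δ ^ 2 else 1 / δ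

/-- `B` is a standard Brownian motion (started at `0`) on the probability space `(Ω, P)`:
continuous paths, `B 0 = 0`, Gaussian increments and independent increments. -/
def IsStandardBM {Ω : Type*} [MeasurableSpace Ω] (P : Measure Ω) (B : ℝ → Ω → ℝ) : Prop :=
  (∀ ω, B 0 ω = 0) ∧
  (∀ ω, Continuous fun t => B t ω) ∧
  (∀ t, Measurable (B t)) ∧
  (∀ s t : ℝ, 0 ≤ s → s ≤ t →
    P.map (fun ω => B t ω - B s ω) = gaussianReal 0 (Real.toNNReal (t - s))) ∧
  (∀ (t : ℕ → ℝ), Monotone t → (∀ i, 0 ≤ t i) →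
    iIndepFun (fun i ω => B (t (i + 1)) ω - B (t i) ω) P)

/-- `X` is the integrate-and-fire process started from `x₀ < 1`, driven by the Brownian
motion `B`: between the successive reset times `T n`, it evolves as the Ornstein–Uhlenbeck
diffusion `dX = −X dt + √2 dB`; it reaches the threshold `1` exactly at the reset times
(as a left limit), where it is instantaneously reset to `0`. -/
structure IsIntegrateFire {Ω : Type*} [MeasurableSpace Ω] (P : Measure Ω)
    (B : ℝ → Ω → ℝ) (x₀ : ℝ) (X : ℝ → Ω → ℝ) (T : ℕ → Ω → ℝ) : Prop where
  bm : IsStandardBM P B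
  measX : ∀ t, Measurable (X t)
  measT : ∀ n, Measurable (T n)
  t_zero : ∀ ω, T 0 ω = 0
  t_mono : ∀ ω n, T n ω < T (n + 1) ω
  t_top : ∀ ω, Tendsto (fun n => T n ω) atTop atTop
  start : ∀ ω, X 0 ω = x₀
  reset : ∀ ω n, 1 ≤ n → X (T n ω) ω = 0
  below : ∀ ω n t, T n ω ≤ t → t < T (n + 1) ω → X t ω < 1
  cont : ∀ ω n, ContinuousOn (fun t => X t ω) (Ico (T n ω) (T (n + 1) ω))
  flow : ∀ ω n t, T n ω ≤ t → t < T (n + 1) ω →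
    X t ω = X (T n ω) ω - (∫ s in (T n ω)..t, X s ω) +
      Real.sqrt 2 * (B t ω - B (T n ω) ω)
  hit : ∀ ω n, Tendsto (fun t => X t ω)
    (nhdsWithin (T (n + 1) ω) (Iio (T (n + 1) ω))) (nhds 1)

/-- `X` is the regularized (random discharge) process with parameter `δ`, started from
`x₀ < 1` and driven by the Brownian motion `B`: between the successive jump times `T n`
it evolves as the Ornstein–Uhlenbeck diffusion `dX = −X dt + √2 dB`, and it jumps
instantaneously to `0` at the event times of a state-dependent Poisson process with
intensity `λ^δ(X_t)`, realized through the i.i.d. `Exp(1)` clocks `Γ n`, independent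
of `B`. -/
structure IsRegularizedIF {Ω : Type*} [MeasurableSpace Ω] (δ : ℝ) (P : Measure Ω)
    (B : ℝ → Ω → ℝ) (Γ : ℕ → Ω → ℝ) (x₀ : ℝ) (X : ℝ → Ω → ℝ) (T : ℕ → Ω → ℝ) : Prop where
  bm : IsStandardBM P B
  measX : ∀ t, Measurable (X t)
  measT : ∀ n, Measurable (T n)
  measΓ : ∀ n, Measurable (Γ n)
  clock_law : ∀ n, P.map (Γ n) = expMeasure 1
  clock_iid : iIndepFun Γ P
  clock_indep_bm : IndepFun (fun ω => fun n => Γ n ω) (fun ω => fun t => B t ω) P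
  t_zero : ∀ ω, T 0 ω = 0
  t_mono : ∀ ω n, T n ω < T (n + 1) ω
  t_top : ∀ ω, Tendsto (fun n => T n ω) atTop atTop
  start : ∀ ω, X 0 ω = x₀
  reset : ∀ ω n, 1 ≤ n → X (T n ω) ω = 0
  cont : ∀ ω n, ContinuousOn (fun t => X t ω) (Ico (T n ω) (T (n + 1) ω))
  flow : ∀ ω n t, T n ω ≤ t → t < T (n + 1) ω →
    X t ω = X (T n ω) ω - (∫ s in (T n ω)..t, X s ω) +
      Real.sqrt 2 * (B t ω - B (T n ω) ω)
  clock_eq : ∀ ω n, (∫ s in (T n ω)..(T (n + 1) ω), lamδ δ (X s ω)) = Γ (n + 1) ω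
  clock_min : ∀ ω n u, T n ω ≤ u → u < T (n + 1) ω →
    (∫ s in (T n ω)..u, lamδ δ (X s ω)) < Γ (n + 1) ω


open scoped NNReal ENNReal in
lemma gauss_Icc_le {v : ℝ≥0} (hv : v ≠ 0) {a : ℝ} (ha : 0 ≤ a) :
    gaussianReal 0 v (Set.Icc (-a) a)
      ≤ ENNReal.ofReal (2 * a / Real.sqrt (2 * Real.pi * v)) := by
  rw [gaussianReal_apply_eq_integral 0 hv]
  apply ENNReal.ofReal_le_ofReal
  have hC : (0:ℝ) < Real.sqrt (2 * Real.pi * v) := by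
    apply Real.sqrt_pos.2
    have : (0:ℝ) < (v:ℝ) := by positivity
    positivity
  calc ∫ x in Set.Icc (-a) a, gaussianPDFReal 0 v x
      ≤ ∫ _x in Set.Icc (-a) a, (Real.sqrt (2 * Real.pi * v))⁻¹ := by
        apply setIntegral_mono_on
        · exact (integrable_gaussianPDFReal 0 v).integrableOn
        · exact integrableOn_const measure_Icc_lt_top.ne
        · exact measurableSet_Icc
        · intro x _
          unfold gaussianPDFReal
          have : Real.exp (-(x - 0) ^ 2 / (2 * v)) ≤ 1 := by
            apply Real.exp_le_one_iff.2
            have hv' : (0:ℝ) < (v:ℝ) := by positivity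
            apply div_nonpos_of_nonpos_of_nonneg
            · simpa using sq_nonneg (x - 0)
            · positivity
          nlinarith [inv_nonneg.2 hC.le]
    _ = 2 * a / Real.sqrt (2 * Real.pi * v) := by
        rw [setIntegral_const, smul_eq_mul, Measure.real, Real.volume_Icc,
          ENNReal.toReal_ofReal (by linarith : (0:ℝ) ≤ a - -a)]
        rw [div_eq_mul_inv]
        ring

lemma factor_le {ε : ℝ} (hε : 0 < ε) {n : ℕ} (hn : 0 < n) (h : 1296 * ε * n ≤ 1) :
    2 * (6 * ε) / Real.sqrt (2 * Real.pi * (ε / n)) ≤ Real.exp (-1) := by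
  have hn' : (0:ℝ) < n := by exact_mod_cast hn
  have hεn : (0:ℝ) < ε / n := by positivity
  have hs : 0 < Real.sqrt (ε / n) := Real.sqrt_pos.2 hεn
  have hss : Real.sqrt (ε / n) ≤ Real.sqrt (2 * Real.pi * (ε / n)) := by
    apply Real.sqrt_le_sqrt
    nlinarith [Real.pi_gt_three]
  have hexp : (1:ℝ)/3 ≤ Real.exp (-1) := by
    rw [Real.exp_neg]
    rw [div_le_iff₀ (by norm_num : (0:ℝ) < 3)]
    rw [inv_mul_eq_div, le_div_iff₀ (Real.exp_pos 1)]
    nlinarith [Real.exp_one_lt_d9]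
  have key : 36 * ε ≤ Real.sqrt (ε / n) := by
    rw [show (36:ℝ) * ε = Real.sqrt ((36*ε)^2) by rw [Real.sqrt_sq (by positivity)]]
    apply Real.sqrt_le_sqrt
    rw [le_div_iff₀ hn']
    nlinarith
  calc 2 * (6 * ε) / Real.sqrt (2 * Real.pi * (ε / n))
      ≤ 2 * (6 * ε) / Real.sqrt (ε / n) := by gcongr
    _ ≤ 1/3 := by rw [div_le_iff₀ hs]; nlinarith
    _ ≤ Real.exp (-1) := hexp

/-- **Fast escape of the OU process from a small window around 1.**
Let `Z¹` be the pathwise solution of `Z¹_t = 1 − ∫_0^t Z¹_s ds + B_t`, and for `ε > 0`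
let `τ₀ = inf{t ≥ 0 : |Z¹_t − 1| = ε}`.  Then there exists `α > 0` such that for all
sufficiently small `ε > 0`, `P(τ₀ > ε) ≤ exp(−ε^{−α})`; in particular one may take
`α = 1/4`.  (For the continuous path `Z¹` with `Z¹_0 = 1`, the event `τ₀ > ε` is
exactly that `|Z¹_t − 1| ≠ ε` for every `t ∈ [0, ε]`, which is how it is written.) -/
theorem fast_escape_OU_window
    {Ω : Type*} [MeasurableSpace Ω] (P : Measure Ω) [IsProbabilityMeasure P]
    (B : ℝ → Ω → ℝ) (hB : IsStandardBM P B)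
    (Z : ℝ → Ω → ℝ)
    (hZcont : ∀ ω, Continuous fun t => Z t ω)
    (hZmeas : ∀ t, Measurable (Z t))
    (hZ : ∀ ω, ∀ t : ℝ, 0 ≤ t → Z t ω = 1 - (∫ s in (0 : ℝ)..t, Z s ω) + B t ω) :
    ∃ α : ℝ, 0 < α ∧ α = 1 / 4 ∧ ∃ ε₀ : ℝ, 0 < ε₀ ∧
      ∀ ε : ℝ, 0 < ε → ε < ε₀ →
        P {ω | ∀ t ∈ Set.Icc (0 : ℝ) ε, |Z t ω - 1| ≠ ε}
          ≤ ENNReal.ofReal (Real.exp (-(ε ^ (-α)))) := by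
  refine ⟨1/4, by norm_num, rfl, 1/100000000, by norm_num, ?_⟩
  intro ε hε hε'
  have hε1 : ε ≤ 1 := by linarith
  set r : ℝ := ε ^ (-(1/4) : ℝ) with hrdef
  have hr1 : 1 ≤ r := Real.one_le_rpow_of_pos_of_le_one_of_nonpos hε hε1 (by norm_num)
  set n : ℕ := ⌈r⌉₊ with hndef
  have hn0 : 0 < n := Nat.ceil_pos.2 (lt_of_lt_of_le one_pos hr1)
  have hn' : (0:ℝ) < n := by exact_mod_cast hn0
  have hnr : r ≤ (n:ℝ) := Nat.le_ceil r
  have hn2 : (n:ℝ) ≤ 2 * r := by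
    have := Nat.ceil_lt_add_one (by linarith : (0:ℝ) ≤ r)
    linarith
  -- smallness: 1296 * ε * n ≤ 1
  have hεr : ε * r = ε ^ ((3:ℝ)/4) := by
    rw [show ((3:ℝ)/4) = 1 + (-(1/4)) by norm_num, Real.rpow_add hε, Real.rpow_one, hrdef]
  have h34 : ε ^ ((3:ℝ)/4) ≤ ε ^ ((1:ℝ)/2) :=
    Real.rpow_le_rpow_of_exponent_ge hε hε1 (by norm_num)
  have h12 : ε ^ ((1:ℝ)/2) = Real.sqrt ε := by
    rw [Real.sqrt_eq_rpow]
  have hsq : Real.sqrt ε ≤ 1/10000 := by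
    rw [show (1/10000 : ℝ) = Real.sqrt ((1/10000)^2) by rw [Real.sqrt_sq (by norm_num)]]
    apply Real.sqrt_le_sqrt
    nlinarith
  have hεn : 1296 * ε * n ≤ 1 := by
    have h1 : ε * (n:ℝ) ≤ 2 * (ε * r) := by nlinarith
    nlinarith
  -- the grid
  set g : ℕ → ℝ := fun i => ((min i n : ℕ) : ℝ) * (ε / n) with hgdef
  have hg_nonneg : ∀ i, 0 ≤ g i := by
    intro i; rw [hgdef]; positivity
  have hg_mono : Monotone g := by
    intro a b hab
    apply mul_le_mul_of_nonneg_right _ (by positivity)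
    exact_mod_cast Nat.cast_le.2 (min_le_min hab le_rfl)
  have hg_le : ∀ i, g i ≤ ε := by
    intro i
    calc g i ≤ (n:ℝ) * (ε / n) := by
          apply mul_le_mul_of_nonneg_right _ (by positivity)
          exact_mod_cast min_le_right i n
      _ = ε := by field_simp
  have hg_diff : ∀ i, i < n → g (i+1) - g i = ε / n := by
    intro i hi
    rw [hgdef]
    simp only [min_eq_left (by omega : i + 1 ≤ n), min_eq_left (by omega : i ≤ n)]
    push_cast
    ring
  -- event inclusion
  have hsub : {ω | ∀ t ∈ Set.Icc (0 : ℝ) ε, |Z t ω - 1| ≠ ε} ⊆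
      ⋂ i ∈ Finset.range n,
        (fun ω => B (g (i + 1)) ω - B (g i) ω) ⁻¹' Set.Icc (-(6*ε)) (6*ε) := by
    intro ω hω
    have hZ0 : Z 0 ω = 1 := by
      have h := hZ ω 0 le_rfl
      have h0 : B 0 ω = 0 := hB.1 ω
      simpa [h0] using h
    have hsmall : ∀ s ∈ Set.Icc (0:ℝ) ε, |Z s ω - 1| < ε := by
      intro s hs
      rcases lt_or_ge (|Z s ω - 1|) ε with h | h
      · exact h
      · exfalso
        have hcont : ContinuousOn (fun u => |Z u ω - 1|) (Set.Icc 0 s) :=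
          (((hZcont ω).sub continuous_const).abs).continuousOn
        have hmem : ε ∈ Set.Icc (|Z 0 ω - 1|) (|Z s ω - 1|) := by
          constructor
          · rw [hZ0]; simpa using hε.le
          · exact h
        obtain ⟨u, hu, hequ⟩ := intermediate_value_Icc hs.1 hcont hmem
        exact hω u ⟨hu.1, hu.2.trans hs.2⟩ hequ
    have hBbd : ∀ s ∈ Set.Icc (0:ℝ) ε, |B s ω| ≤ 3 * ε := by
      intro s hs
      have heq := hZ ω s hs.1
      have hint : |∫ u in (0:ℝ)..s, Z u ω| ≤ (1 + ε) * |s - 0| := by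
        rw [← Real.norm_eq_abs]
        apply intervalIntegral.norm_integral_le_of_norm_le_const
        intro x hx
        rw [Set.uIoc_of_le hs.1] at hx
        have hx' := hsmall x ⟨hx.1.le, hx.2.trans hs.2⟩
        have : |Z x ω| ≤ |Z x ω - 1| + 1 := by
          calc |Z x ω| = |(Z x ω - 1) + 1| := by ring_nf
            _ ≤ |Z x ω - 1| + |1| := abs_add_le _ _
            _ = |Z x ω - 1| + 1 := by rw [abs_one]
        rw [Real.norm_eq_abs]
        linarith
      rw [abs_of_nonneg (by linarith [hs.1] : (0:ℝ) ≤ s - 0)] at hint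
      have h1 := hsmall s hs
      have hBeq : B s ω = (Z s ω - 1) + ∫ u in (0:ℝ)..s, Z u ω := by linarith
      have habs : |B s ω| ≤ |Z s ω - 1| + |∫ u in (0:ℝ)..s, Z u ω| := by
        rw [hBeq]; exact abs_add_le _ _
      have hmul : (1 + ε) * (s - 0) ≤ (1 + ε) * ε := by
        apply mul_le_mul_of_nonneg_left _ (by linarith)
        linarith [hs.2]
      nlinarith
    refine Set.mem_iInter₂.2 fun i hi => ?_
    have ha := hBbd (g (i+1)) ⟨hg_nonneg _, hg_le _⟩
    have hb := hBbd (g i) ⟨hg_nonneg _, hg_le _⟩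
    have ha' := abs_le.1 ha
    have hb' := abs_le.1 hb
    have hmem : B (g (i + 1)) ω - B (g i) ω ∈ Set.Icc (-(6*ε)) (6*ε) :=
      Set.mem_Icc.2 ⟨by linarith [ha'.1, hb'.2], by linarith [ha'.2, hb'.1]⟩
    simpa using hmem
  -- independence and per-factor bound
  have hIndep := hB.2.2.2.2 g hg_mono hg_nonneg
  have hWmeas : ∀ i : ℕ, Measurable (fun ω => B (g (i + 1)) ω - B (g i) ω) :=
    fun i => (hB.2.2.1 _).sub (hB.2.2.1 _)
  have hfac : ∀ i ∈ Finset.range n,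
      P ((fun ω => B (g (i + 1)) ω - B (g i) ω) ⁻¹' Set.Icc (-(6*ε)) (6*ε))
        ≤ ENNReal.ofReal (Real.exp (-1)) := by
    intro i hi
    rw [← Measure.map_apply (hWmeas i) measurableSet_Icc,
      hB.2.2.2.1 (g i) (g (i+1)) (hg_nonneg i) (hg_mono (Nat.le_succ i)),
      hg_diff i (Finset.mem_range.1 hi)]
    have hv : Real.toNNReal (ε / n) ≠ 0 := by
      rw [Ne, Real.toNNReal_eq_zero]
      push_neg
      positivity
    refine (gauss_Icc_le hv (by positivity)).trans ?_
    apply ENNReal.ofReal_le_ofReal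
    rw [Real.coe_toNNReal _ (by positivity)]
    exact factor_le hε hn0 hεn
  -- assemble
  calc P {ω | ∀ t ∈ Set.Icc (0 : ℝ) ε, |Z t ω - 1| ≠ ε}
      ≤ P (⋂ i ∈ Finset.range n,
          (fun ω => B (g (i + 1)) ω - B (g i) ω) ⁻¹' Set.Icc (-(6*ε)) (6*ε)) :=
        measure_mono hsub
    _ = ∏ i ∈ Finset.range n,
          P ((fun ω => B (g (i + 1)) ω - B (g i) ω) ⁻¹' Set.Icc (-(6*ε)) (6*ε)) :=
        hIndep.meas_biInter (fun i _ => ⟨Set.Icc (-(6*ε)) (6*ε), measurableSet_Icc, rfl⟩)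
    _ ≤ ∏ _i ∈ Finset.range n, ENNReal.ofReal (Real.exp (-1)) := Finset.prod_le_prod' hfac
    _ = ENNReal.ofReal (Real.exp (-1)) ^ n := by rw [Finset.prod_const, Finset.card_range]
    _ = ENNReal.ofReal (Real.exp (-1) ^ n) := by
        rw [ENNReal.ofReal_pow (Real.exp_pos _).le]
    _ ≤ ENNReal.ofReal (Real.exp (-(ε ^ (-(1/4) : ℝ)))) := by
        apply ENNReal.ofReal_le_ofReal
        rw [← Real.exp_nat_mul]
        apply Real.exp_le_exp.2
        rw [← hrdef]
        nlinarith



end NeuronIF
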